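/- If the envy graph of an allocation X contains no directed cycle of positive total weight, then X is envy-freeable: there exists a nonnegative payment vector π such that v_i(X_i) + π_i ≥ v_i(X_j) + π_j for all agents i, j. Moreover, setting π_i equal to the maximum total weight of a simple directed path starting at node i in the envy graph yields such a payment vector. -/

import Mathlib

/-- Total weight of a walk (list of vertices) under edge weights `w`. -/
def walkWeight {V : Type*} (w : V → V → ℝ) : List V → ℝ
  | [] => 0
  | [_] => 0
  | a :: b :: l => w a b + walkWeight w (b :: l)

lemma walkWeight_cons {V : Type*} (w : V → V → ℝ) (a b : V) (l : List V) :
    walkWeight w (a :: b :: l) = w a b + walkWeight w (b :: l) := rfl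

lemma walkWeight_append {V : Type*} (w : V → V → ℝ) (l1 : List V) (x : V) (l2 : List V) :
    walkWeight w (l1 ++ x :: l2) = walkWeight w (l1 ++ [x]) + walkWeight w (x :: l2) := by
  induction l1 with
  | nil => simp [walkWeight]
  | cons a t ih =>
    cases t with
    | nil =>
      simp only [List.nil_append, List.cons_append, walkWeight_cons]
      simp [walkWeight]
    | cons b t' =>
      simp only [List.cons_append, walkWeight_cons] at *
      rw [ih]; ring

/-- If the envy graph of an allocation (with `v i j` the value of agent `i` for
bundle `j`, and edge weight `v i j - v i i`) has no directed cycle of positive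
total weight, then the allocation is envy-freeable; moreover the payments
`π i` = maximum total weight of a simple path starting at `i` witness this. -/
theorem stmt1 {n : ℕ} (v : Fin n → Fin n → ℝ)
    (hcyc : ∀ (a : Fin n) (l : List (Fin n)), (a :: l).Nodup →
      walkWeight (fun i j => v i j - v i i) (a :: (l ++ [a])) ≤ 0) :
    ∃ π : Fin n → ℝ,
      (∀ i, IsGreatest {x : ℝ | ∃ l : List (Fin n), l.Nodup ∧ l.head? = some i ∧
        x = walkWeight (fun i j => v i j - v i i) l} (π i)) ∧
      (∀ i, 0 ≤ π i) ∧ ∀ i j, v i i + π i ≥ v i j + π j := by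
  set w : Fin n → Fin n → ℝ := fun i j => v i j - v i i with hw
  set S : Fin n → Set ℝ := fun i =>
    {x : ℝ | ∃ l : List (Fin n), l.Nodup ∧ l.head? = some i ∧ x = walkWeight w l} with hS
  have hfin : ∀ i, (S i).Finite := by
    intro i
    apply Set.Finite.subset (((List.finite_length_le (Fin n) n).image (walkWeight w)))
    rintro x ⟨l, hnd, -, rfl⟩
    exact ⟨l, by simpa using hnd.length_le_card, rfl⟩
  have hmem0 : ∀ i, (0 : ℝ) ∈ S i := by
    intro i
    exact ⟨[i], List.nodup_singleton i, rfl, rfl⟩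
  set π : Fin n → ℝ := fun i => sSup (S i) with hπ
  have hub : ∀ i, ∀ x ∈ S i, x ≤ π i := fun i x hx => le_csSup (hfin i).bddAbove hx
  have hgr : ∀ i, IsGreatest (S i) (π i) := by
    intro i
    exact ⟨Set.Nonempty.csSup_mem ⟨0, hmem0 i⟩ (hfin i), fun x hx => hub i x hx⟩
  have key : ∀ (i : Fin n) (l : List (Fin n)), l.Nodup → walkWeight w (i :: l) ≤ π i := by
    intro i l hnd
    by_cases hi : i ∈ l
    · obtain ⟨p, q, rfl⟩ := List.append_of_mem hi
      have hp : p.Nodup := hnd.of_append_left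
      have hiq : (i :: q).Nodup := hnd.of_append_right
      have hip : i ∉ p := fun h =>
        (List.disjoint_of_nodup_append hnd) h (List.mem_cons_self : i ∈ i :: q)
      have h1 : walkWeight w (i :: (p ++ i :: q))
          = walkWeight w (i :: (p ++ [i])) + walkWeight w (i :: q) := by
        have := walkWeight_append w (i :: p) i q
        simpa using this
      have h2 : walkWeight w (i :: (p ++ [i])) ≤ 0 :=
        hcyc i p (List.nodup_cons.mpr ⟨hip, hp⟩)
      have h3 : walkWeight w (i :: q) ≤ π i :=
        hub i _ ⟨i :: q, hiq, rfl, rfl⟩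
      rw [h1]; linarith
    · exact hub i _ ⟨i :: l, List.nodup_cons.mpr ⟨hi, hnd⟩, rfl, rfl⟩
  refine ⟨π, hgr, fun i => le_trans (le_of_eq rfl) (hub i 0 (hmem0 i)), ?_⟩
  intro i j
  obtain ⟨lj, hnd, hhd, heq⟩ := (hgr j).1
  cases lj with
  | nil => simp at hhd
  | cons j' t =>
    have hj : j' = j := by simpa using hhd
    subst hj
    have hkey := key i (j' :: t) hnd
    rw [walkWeight_cons] at hkey
    have hwij : w i j' = v i j' - v i i := rfl
    rw [hwij, ← heq] at hkey
    linarith
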